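/- Let 2 ≤ r < s be integers with s ≥ 2r. Then the minimum order n_bb(r,s;4) of a balanced biregular graph of girth 4 with degrees r and s equals 4(s − r). -/

import Mathlib

open SimpleGraph Set

/-- The degree of a vertex, via the natural cardinality of its neighbor set. -/
noncomputable def deg {V : Type*} (G : SimpleGraph V) (v : V) : ℕ :=
  (G.neighborSet v).ncard

/-- Number of edges both of whose endpoints have degree `d`. -/
noncomputable def edgeCountDeg {V : Type*} (G : SimpleGraph V) (d : ℕ) : ℕ :=
  {e ∈ G.edgeSet | ∀ v ∈ e, deg G v = d}.ncard

/-- An `(r,s;g)`-balanced biregular graph: girth `g`, degree set exactly `{r, s}`,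
and equally many vertices of degree `r` as of degree `s`. -/
def IsBabi {V : Type*} (r s g : ℕ) (G : SimpleGraph V) : Prop :=
  G.girth = g ∧ (∀ v, deg G v = r ∨ deg G v = s) ∧
  (∃ v, deg G v = r) ∧ (∃ v, deg G v = s) ∧
  {v | deg G v = r}.ncard = {v | deg G v = s}.ncard

section A
variable {V : Type*} {G : SimpleGraph V}

lemma deg_eq_degree [Fintype V] (G : SimpleGraph V) [DecidableRel G.Adj] (v : V) :
    deg G v = G.degree v := by
  rw [deg, degree, ← Set.ncard_coe_finset]
  congr 1
  ext x; simp

lemma triangle_cycle {a b c : V} (hab : G.Adj a b) (hbc : G.Adj b c) (hac : G.Adj a c) :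
    ∃ w : G.Walk a a, w.IsCycle ∧ w.length = 3 := by
  refine ⟨.cons hab (.cons hbc (.cons hac.symm .nil)), ?_, rfl⟩
  rw [Walk.cons_isCycle_iff]
  constructor
  · rw [Walk.isPath_def]
    simp [hbc.ne, hab.ne, hab.ne', hac.ne, hac.ne']
  · simp only [Walk.edges_cons, Walk.edges_nil, List.mem_cons, List.not_mem_nil, or_false]
    rintro (h | h) <;> rw [Sym2.eq_iff] at h <;>
      rcases h with ⟨h1, h2⟩ | ⟨h1, h2⟩ <;> subst_vars <;>
      first
        | exact G.irrefl hab
        | exact G.irrefl hbc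
        | exact G.irrefl hac
        | exact hab.ne rfl
        | exact hbc.ne rfl
        | exact hac.ne rfl

lemma girth4_egirth (h : G.girth = 4) : G.egirth = 4 := by
  have hne : G.egirth ≠ ⊤ := by
    intro ht
    rw [girth, ht] at h
    simp at h
  rw [girth] at h
  rw [← ENat.coe_toNat hne, h]
  rfl

lemma girth4_triangle_free (h : G.girth = 4) : ∀ a b c : V,
    G.Adj a b → G.Adj b c → G.Adj a c → False := by
  intro a b c hab hbc hac
  obtain ⟨w, hw, hl⟩ := triangle_cycle hab hbc hac
  have := (le_egirth.mp (girth4_egirth h).ge) a w hw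
  rw [hl] at this
  exact absurd this (by norm_num)

end A

lemma lower_bound (r s n : ℕ) (hr : 2 ≤ r) (hrs : r < s) (h2r : 2 * r ≤ s)
    (G : SimpleGraph (Fin n)) (hB : IsBabi r s 4 G) : 4 * (s - r) ≤ n := by
  classical
  obtain ⟨hg, hdeg, ⟨vr, hvr⟩, ⟨vs, hvs⟩, hbal⟩ := hB
  have tf := girth4_triangle_free hg
  set t := s - r with ht
  have hst : s = r + t := by omega
  have htr : r ≤ t := by omega
  -- the degree-classes
  set S : Finset (Fin n) := Finset.univ.filter (fun v => deg G v = s) with hS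
  set R : Finset (Fin n) := Finset.univ.filter (fun v => deg G v = r) with hR
  have hRS : Disjoint R S := by
    rw [Finset.disjoint_filter]
    intro v _ h1 h2; omega
  have hRuS : R ∪ S = Finset.univ := by
    ext v; simp only [Finset.mem_union, hS, hR, Finset.mem_filter, Finset.mem_univ, true_and,
      iff_true]
    exact hdeg v
  have hcard : R.card = S.card := by
    have h1 : {v | deg G v = r}.ncard = R.card := by
      rw [← Set.ncard_coe_finset R]; congr 1; ext v; simp [hR]
    have h2 : {v | deg G v = s}.ncard = S.card := by
      rw [← Set.ncard_coe_finset S]; congr 1; ext v; simp [hS]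
    rw [← h1, ← h2, hbal]
  set k := S.card with hk
  have hn : n = 2 * k := by
    have := Finset.card_union_of_disjoint hRS
    rw [hRuS, Finset.card_univ, Fintype.card_fin] at this
    omega
  have hkpos : 0 < k := Finset.card_pos.mpr ⟨vs, by simp [hS, hvs]⟩
  -- degree-within-class counts
  set d : Fin n → ℕ := fun v => (G.neighborFinset v ∩ S).card with hd
  set dR : Fin n → ℕ := fun v => (G.neighborFinset v ∩ R).card with hdR
  have hsplit : ∀ v, dR v + d v = deg G v := by
    intro v
    rw [deg_eq_degree, degree]
    rw [hd, hdR]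
    rw [← Finset.card_union_of_disjoint (Finset.disjoint_of_subset_left
      (Finset.inter_subset_right) (Finset.disjoint_of_subset_right Finset.inter_subset_right hRS))]
    congr 1
    rw [← Finset.inter_union_distrib_left, hRuS, Finset.inter_univ]
  -- expressing counts as double sums
  have hcnt : ∀ (A : Finset (Fin n)) (v : Fin n),
      (G.neighborFinset v ∩ A).card = ∑ u ∈ A, if G.Adj v u then 1 else 0 := by
    intro A v
    rw [← Finset.card_filter]
    congr 1
    ext u; simp [Finset.mem_filter, adj_comm]; tauto
  have hcross : ∑ v ∈ S, dR v = ∑ v ∈ R, d v := by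
    simp only [hd, hdR]
    rw [Finset.sum_congr rfl (fun v _ => hcnt R v), Finset.sum_congr rfl (fun v _ => hcnt S v),
      Finset.sum_comm]
    apply Finset.sum_congr rfl; intro u _
    apply Finset.sum_congr rfl; intro v _
    simp [adj_comm]
  set E := ∑ v ∈ S, d v with hE
  have hS1 : E + ∑ v ∈ S, dR v = k * s := by
    rw [hE, ← Finset.sum_add_distrib]
    rw [Finset.sum_congr rfl (fun v hv => by
      rw [add_comm, hsplit v, (Finset.mem_filter.mp hv).2])]
    simp [mul_comm, hk]
  have hR1 : ∑ v ∈ R, d v + ∑ v ∈ R, dR v = k * r := by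
    rw [← Finset.sum_add_distrib]
    rw [Finset.sum_congr rfl (fun v hv => by
      rw [add_comm, hsplit v, (Finset.mem_filter.mp hv).2])]
    simp [hcard, mul_comm]
  have hElow : k * t ≤ E := by
    have h2 : ∑ v ∈ S, dR v ≤ k * r := by rw [hcross]; omega
    have h3 : k * s = k * r + k * t := by rw [hst]; ring
    omega
  have hEpos : 0 < E := lt_of_lt_of_le (Nat.mul_pos hkpos (by omega)) hElow
  -- Mantel-type bound : 2 * ∑ d² ≤ k * E
  have key2 : ∀ u v, G.Adj u v → u ∈ S → v ∈ S → d u + d v ≤ k := by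
    intro u v huv hu hv
    have hdisj : Disjoint (G.neighborFinset u ∩ S) (G.neighborFinset v ∩ S) := by
      rw [Finset.disjoint_left]
      intro w hw1 hw2
      simp only [Finset.mem_inter, mem_neighborFinset] at hw1 hw2
      exact tf u w v hw1.1 hw2.1.symm huv
    calc d u + d v = ((G.neighborFinset u ∩ S) ∪ (G.neighborFinset v ∩ S)).card :=
          (Finset.card_union_of_disjoint hdisj).symm
      _ ≤ S.card := Finset.card_le_card (by
          apply Finset.union_subset <;> exact Finset.inter_subset_right)
  have hswap : ∑ u ∈ S, ∑ v ∈ G.neighborFinset u ∩ S, d v = ∑ v ∈ S, d v * d v := by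
    have h1 : ∀ u, ∑ v ∈ G.neighborFinset u ∩ S, d v
        = ∑ v ∈ S, if G.Adj u v then d v else 0 := by
      intro u
      rw [← Finset.sum_filter]
      congr 1
      ext w; simp [Finset.mem_filter]; tauto
    rw [Finset.sum_congr rfl (fun u _ => h1 u), Finset.sum_comm]
    apply Finset.sum_congr rfl; intro v hv
    rw [← Finset.sum_filter, Finset.sum_const, smul_eq_mul, mul_comm]
    congr 1
    show (S.filter fun a => G.Adj a v).card = (G.neighborFinset v ∩ S).card
    congr 1
    ext u
    simp only [Finset.mem_filter, Finset.mem_inter, mem_neighborFinset]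
    rw [G.adj_comm]
    tauto
  have mantel : ∑ v ∈ S, d v * d v + ∑ v ∈ S, d v * d v ≤ k * E := by
    have hstep : ∀ u ∈ S, ∑ v ∈ G.neighborFinset u ∩ S, (d u + d v) ≤ d u * k := by
      intro u hu
      calc ∑ v ∈ G.neighborFinset u ∩ S, (d u + d v) ≤ ∑ v ∈ G.neighborFinset u ∩ S, k := by
            apply Finset.sum_le_sum
            intro v hv
            simp only [Finset.mem_inter, mem_neighborFinset] at hv
            exact key2 u v hv.1 hu hv.2
        _ = d u * k := by rw [Finset.sum_const, smul_eq_mul, hd]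
    have htot : ∑ u ∈ S, ∑ v ∈ G.neighborFinset u ∩ S, (d u + d v) ≤ E * k := by
      calc ∑ u ∈ S, ∑ v ∈ G.neighborFinset u ∩ S, (d u + d v) ≤ ∑ u ∈ S, d u * k :=
            Finset.sum_le_sum hstep
        _ = E * k := by rw [hE, Finset.sum_mul]
    have hlhs : ∑ u ∈ S, ∑ v ∈ G.neighborFinset u ∩ S, (d u + d v)
        = ∑ v ∈ S, d v * d v + ∑ v ∈ S, d v * d v := by
      rw [Finset.sum_congr rfl (fun u _ => Finset.sum_add_distrib), Finset.sum_add_distrib, hswap]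
      congr 1
      apply Finset.sum_congr rfl; intro u _
      rw [Finset.sum_const, smul_eq_mul, hd]
    rw [← hlhs]
    calc ∑ u ∈ S, ∑ v ∈ G.neighborFinset u ∩ S, (d u + d v) ≤ E * k := htot
      _ = k * E := mul_comm _ _
  -- Cauchy-Schwarz
  have cs : E * E ≤ (∑ v ∈ S, d v * d v) * k := by
    have := Finset.sum_mul_sq_le_sq_mul_sq (R := ℕ) S d 1
    simpa [hE, pow_two, hk] using this
  -- combine
  have h2E : 2 * E ≤ k * k := by
    have h1 : 2 * E * E ≤ k * k * E := by
      calc 2 * E * E = 2 * (E * E) := by ring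
        _ ≤ 2 * ((∑ v ∈ S, d v * d v) * k) := by
            exact Nat.mul_le_mul_left 2 cs
        _ = (∑ v ∈ S, d v * d v + ∑ v ∈ S, d v * d v) * k := by ring
        _ ≤ (k * E) * k := Nat.mul_le_mul_right k mantel
        _ = k * k * E := by ring
    exact Nat.le_of_mul_le_mul_right h1 hEpos
  have : 2 * (k * t) ≤ k * k := le_trans (by omega) h2E
  have h2t : 2 * t ≤ k := by
    have h4 : k * (2 * t) ≤ k * k := by
      calc k * (2 * t) = 2 * (k * t) := by ring
        _ ≤ k * k := this
    exact Nat.le_of_mul_le_mul_left h4 hkpos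
  omega


section C
variable (r t : ℕ)

def bAdj (x y : Fin 4 × Fin t) : Prop :=
  (x.1 = 0 ∧ y.1 = 1) ∨ (x.1 = 1 ∧ y.1 = 0) ∨
  (x.1 = 2 ∧ y.1 = 0 ∧ (y.2 - x.2).val < r) ∨ (x.1 = 0 ∧ y.1 = 2 ∧ (x.2 - y.2).val < r) ∨
  (x.1 = 3 ∧ y.1 = 1 ∧ (y.2 - x.2).val < r) ∨ (x.1 = 1 ∧ y.1 = 3 ∧ (x.2 - y.2).val < r)

def baseGraph : SimpleGraph (Fin 4 × Fin t) where
  Adj := bAdj r t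
  symm := by constructor; intro x y h; unfold bAdj at *; tauto
  loopless := by
    constructor; intro x h
    rcases h with ⟨h1, h2⟩ | ⟨h1, h2⟩ | ⟨h1, h2, _⟩ | ⟨h1, h2, _⟩ | ⟨h1, h2, _⟩ | ⟨h1, h2, _⟩ <;>
      rw [h1] at h2 <;> exact absurd h2 (by decide)

variable {r t}
variable [NeZero t]

omit [NeZero t] in
lemma card_lt (h : r ≤ t) : {j : Fin t | j.val < r}.ncard = r := by
  have : {j : Fin t | j.val < r} = (Fin.castLE h) '' Set.univ := by
    ext x
    simp only [mem_setOf_eq, image_univ, mem_range]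
    constructor
    · intro hx; exact ⟨⟨x.val, hx⟩, by ext; simp⟩
    · rintro ⟨y, rfl⟩; exact y.2
  rw [this, Set.ncard_image_of_injective _ (Fin.castLE_injective h), Set.ncard_univ,
    Nat.card_eq_fintype_card, Fintype.card_fin]

lemma ns0 (i : Fin t) : (baseGraph r t).neighborSet (0, i) =
    (fun j => ((1 : Fin 4), j)) '' Set.univ ∪ (fun j => ((2 : Fin 4), i - j)) '' {j | j.val < r} := by
  ext ⟨c, y⟩
  simp only [mem_neighborSet, baseGraph, bAdj, mem_union, mem_image, mem_setOf_eq, image_univ,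
    mem_range]
  constructor
  · rintro (⟨h1, h2⟩ | ⟨h1, h2⟩ | ⟨h1, h2, h3⟩ | ⟨h1, h2, h3⟩ | ⟨h1, h2, h3⟩ | ⟨h1, h2, h3⟩) <;>
      simp_all
    exact ⟨i - y, h3, sub_sub_cancel _ _⟩
  · rintro (⟨j, hj⟩ | ⟨j, hjr, hj⟩) <;>
      (simp only [Prod.mk.injEq] at hj; obtain ⟨rfl, rfl⟩ := hj)
    · simp
    · refine Or.inr (Or.inr (Or.inr (Or.inl ⟨by trivial, by trivial, ?_⟩)))
      rw [sub_sub_cancel]; exact hjr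

lemma ns1 (i : Fin t) : (baseGraph r t).neighborSet (1, i) =
    (fun j => ((0 : Fin 4), j)) '' Set.univ ∪ (fun j => ((3 : Fin 4), i - j)) '' {j | j.val < r} := by
  ext ⟨c, y⟩
  simp only [mem_neighborSet, baseGraph, bAdj, mem_union, mem_image, mem_setOf_eq, image_univ,
    mem_range]
  constructor
  · rintro (⟨h1, h2⟩ | ⟨h1, h2⟩ | ⟨h1, h2, h3⟩ | ⟨h1, h2, h3⟩ | ⟨h1, h2, h3⟩ | ⟨h1, h2, h3⟩) <;>
      simp_all
    exact ⟨i - y, h3, sub_sub_cancel _ _⟩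
  · rintro (⟨j, hj⟩ | ⟨j, hjr, hj⟩) <;>
      (simp only [Prod.mk.injEq] at hj; obtain ⟨rfl, rfl⟩ := hj)
    · simp
    · refine Or.inr (Or.inr (Or.inr (Or.inr (Or.inr ⟨by trivial, by trivial, ?_⟩))))
      rw [sub_sub_cancel]; exact hjr

lemma ns2 (i : Fin t) : (baseGraph r t).neighborSet (2, i) =
    (fun j => ((0 : Fin 4), i + j)) '' {j | j.val < r} := by
  ext ⟨c, y⟩
  simp only [mem_neighborSet, baseGraph, bAdj, mem_image, mem_setOf_eq]
  constructor
  · rintro (⟨h1, h2⟩ | ⟨h1, h2⟩ | ⟨h1, h2, h3⟩ | ⟨h1, h2, h3⟩ | ⟨h1, h2, h3⟩ | ⟨h1, h2, h3⟩) <;>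
      simp_all
    exact ⟨y - i, h3, add_sub_cancel _ _⟩
  · rintro ⟨j, hjr, hj⟩
    simp only [Prod.mk.injEq] at hj; obtain ⟨rfl, rfl⟩ := hj
    refine Or.inr (Or.inr (Or.inl ⟨by trivial, by trivial, ?_⟩))
    rw [add_sub_cancel_left]; exact hjr

lemma ns3 (i : Fin t) : (baseGraph r t).neighborSet (3, i) =
    (fun j => ((1 : Fin 4), i + j)) '' {j | j.val < r} := by
  ext ⟨c, y⟩
  simp only [mem_neighborSet, baseGraph, bAdj, mem_image, mem_setOf_eq]
  constructor
  · rintro (⟨h1, h2⟩ | ⟨h1, h2⟩ | ⟨h1, h2, h3⟩ | ⟨h1, h2, h3⟩ | ⟨h1, h2, h3⟩ | ⟨h1, h2, h3⟩) <;>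
      simp_all
    exact ⟨y - i, h3, add_sub_cancel _ _⟩
  · rintro ⟨j, hjr, hj⟩
    simp only [Prod.mk.injEq] at hj; obtain ⟨rfl, rfl⟩ := hj
    refine Or.inr (Or.inr (Or.inr (Or.inr (Or.inl ⟨by trivial, by trivial, ?_⟩))))
    rw [add_sub_cancel_left]; exact hjr


lemma deg0 (h : r ≤ t) (i : Fin t) : deg (baseGraph r t) (0, i) = t + r := by
  rw [deg, ns0, Set.ncard_union_eq]
  · rw [Set.ncard_image_of_injective _ (fun a b hab => by
        simpa [Prod.mk.injEq] using hab),
      Set.ncard_image_of_injective _ (fun a b hab => by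
        simp only [Prod.mk.injEq, true_and] at hab
        exact sub_right_injective hab),
      Set.ncard_univ, Nat.card_eq_fintype_card, Fintype.card_fin, card_lt h]
  · rw [Set.disjoint_left]
    rintro x ⟨a, -, rfl⟩ ⟨b, hb, hx⟩
    simp [Prod.mk.injEq] at hx

lemma deg1 (h : r ≤ t) (i : Fin t) : deg (baseGraph r t) (1, i) = t + r := by
  rw [deg, ns1, Set.ncard_union_eq]
  · rw [Set.ncard_image_of_injective _ (fun a b hab => by
        simpa [Prod.mk.injEq] using hab),
      Set.ncard_image_of_injective _ (fun a b hab => by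
        simp only [Prod.mk.injEq, true_and] at hab
        exact sub_right_injective hab),
      Set.ncard_univ, Nat.card_eq_fintype_card, Fintype.card_fin, card_lt h]
  · rw [Set.disjoint_left]
    rintro x ⟨a, -, rfl⟩ ⟨b, hb, hx⟩
    simp [Prod.mk.injEq] at hx

lemma deg2 (h : r ≤ t) (i : Fin t) : deg (baseGraph r t) (2, i) = r := by
  rw [deg, ns2, Set.ncard_image_of_injective _ (fun a b hab => by
      simp only [Prod.mk.injEq, true_and] at hab
      exact add_right_injective i hab), card_lt h]

lemma deg3 (h : r ≤ t) (i : Fin t) : deg (baseGraph r t) (3, i) = r := by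
  rw [deg, ns3, Set.ncard_image_of_injective _ (fun a b hab => by
      simp only [Prod.mk.injEq, true_and] at hab
      exact add_right_injective i hab), card_lt h]


def bcol : (baseGraph r t).Coloring Bool :=
  SimpleGraph.Coloring.mk (fun x => ![false, true, true, false] x.1) (by
    rintro ⟨c1, i1⟩ ⟨c2, i2⟩ h
    rcases h with ⟨h1, h2⟩ | ⟨h1, h2⟩ | ⟨h1, h2, _⟩ | ⟨h1, h2, _⟩ | ⟨h1, h2, _⟩ | ⟨h1, h2, _⟩ <;>
      (dsimp only at h1 h2 ⊢; rw [h1, h2]; decide))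

lemma even_closed {u : Fin 4 × Fin t} (w : (baseGraph r t).Walk u u) : Even w.length :=
  (Coloring.even_length_iff_congr bcol w).mpr Iff.rfl

lemma girth_base (h2 : 2 ≤ t) : (baseGraph r t).girth = 4 := by
  have hadj : ∀ z z' : Fin t, (baseGraph r t).Adj (0, z) (1, z') := fun _ _ => Or.inl ⟨rfl, rfl⟩
  set z0 : Fin t := ⟨0, by omega⟩ with hz0
  set z1 : Fin t := ⟨1, by omega⟩ with hz1
  have hz : z0 ≠ z1 := by simp [hz0, hz1, Fin.mk.injEq]
  set w : (baseGraph r t).Walk (0, z0) (0, z0) :=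
    .cons (hadj z0 z0) (.cons ((hadj z1 z0).symm) (.cons (hadj z1 z1)
      (.cons ((hadj z0 z1).symm) .nil))) with hw
  have hwc : w.IsCycle := by
    rw [hw, Walk.cons_isCycle_iff]
    constructor
    · rw [Walk.isPath_def]
      simp [Prod.mk.injEq, hz, hz.symm]
    · simp only [Walk.edges_cons, Walk.edges_nil, List.mem_cons, List.not_mem_nil, or_false]
      rintro (h | h | h) <;> rw [Sym2.eq_iff] at h <;>
        rcases h with ⟨ha, hb⟩ | ⟨ha, hb⟩ <;> simp [Prod.mk.injEq, hz, hz.symm] at ha hb <;>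
        simp_all
  have hub : (baseGraph r t).egirth ≤ 4 := by
    have := (le_egirth.mp (le_refl (baseGraph r t).egirth)) _ w hwc
    simpa [hw] using this
  have hlb : 4 ≤ (baseGraph r t).egirth := by
    rw [le_egirth]
    intro a w' hw'
    have h3 := hw'.three_le_length
    have he := even_closed w'
    obtain ⟨c, hc⟩ := he
    have : 4 ≤ w'.length := by omega
    exact_mod_cast this
  rw [girth, le_antisymm hub hlb]
  rfl


lemma class_r (h : r ≤ t) (ht : 0 < t) :
    {v : Fin 4 × Fin t | deg (baseGraph r t) v = r} = {v | v.1 = 2 ∨ v.1 = 3} := by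
  ext ⟨c, i⟩
  fin_cases c <;>
    simp [deg0 h, deg1 h, deg2 h, deg3 h] <;> omega

lemma class_s (h : r ≤ t) (ht : 0 < t) :
    {v : Fin 4 × Fin t | deg (baseGraph r t) v = t + r} = {v | v.1 = 0 ∨ v.1 = 1} := by
  ext ⟨c, i⟩
  fin_cases c <;>
    simp [deg0 h, deg1 h, deg2 h, deg3 h] <;> omega

lemma class_image :
    {v : Fin 4 × Fin t | v.1 = 2 ∨ v.1 = 3} =
      (fun x : Fin 4 × Fin t => (x.1 + 2, x.2)) '' {v | v.1 = 0 ∨ v.1 = 1} := by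
  ext ⟨c, i⟩
  simp only [mem_setOf_eq, mem_image, Prod.mk.injEq, Prod.exists]
  constructor
  · rintro (rfl | rfl)
    · exact ⟨0, i, Or.inl rfl, by decide, rfl⟩
    · exact ⟨1, i, Or.inr rfl, by decide, rfl⟩
  · rintro ⟨c', i', (rfl | rfl), rfl, rfl⟩
    · left; decide
    · right; decide

lemma isBabi_base (hr : 2 ≤ r) (hrt : r ≤ t) : IsBabi r (t + r) 4 (baseGraph r t) := by
  have ht : 0 < t := by omega
  refine ⟨girth_base (by omega), ?_, ⟨(2, 0), deg2 hrt 0⟩, ⟨(0, 0), deg0 hrt 0⟩, ?_⟩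
  · rintro ⟨c, i⟩
    fin_cases c
    · right; exact deg0 hrt i
    · right; exact deg1 hrt i
    · left; exact deg2 hrt i
    · left; exact deg3 hrt i
  · rw [class_r hrt ht, class_s hrt ht, class_image,
      Set.ncard_image_of_injective _ (fun a b hab => by
        simp only [Prod.mk.injEq] at hab
        exact Prod.ext (add_left_injective 2 hab.1) hab.2)]

end C

section T
variable {V W : Type*} (e : V ≃ W) (G : SimpleGraph V)

lemma map_neighborSet (v : V) :
    (G.map e.toEmbedding).neighborSet (e v) = e '' G.neighborSet v := by
  ext w
  simp only [mem_neighborSet, SimpleGraph.map_adj, Equiv.coe_toEmbedding, mem_image]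
  constructor
  · rintro ⟨-, a, b, hab, ha, rfl⟩
    have : a = v := e.injective ha
    subst this
    exact ⟨b, hab, rfl⟩
  · rintro ⟨b, hb, rfl⟩
    exact ⟨e.injective.ne hb.ne, v, b, hb, rfl, rfl⟩

lemma deg_map (v : V) : deg (G.map e.toEmbedding) (e v) = deg G v := by
  rw [deg, map_neighborSet, Set.ncard_image_of_injective _ e.injective, deg]

lemma egirth_map : (G.map e.toEmbedding).egirth = G.egirth := by
  apply le_antisymm
  · rw [le_egirth]
    intro a w hw
    have hinj : Function.Injective (⇑e) := e.injective
    let f : G →g (G.map e.toEmbedding) := ⟨e, fun h => ⟨e.injective.ne h.ne, _, _, h, rfl, rfl⟩⟩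
    have hc : (w.map f).IsCycle := (Walk.map_isCycle_iff_of_injective hinj).mpr hw
    have := le_egirth.mp le_rfl _ (w.map f) hc
    simpa [Walk.length_map] using this
  · rw [le_egirth]
    intro a w hw
    have hadj : ∀ x y, (G.map e.toEmbedding).Adj x y → G.Adj (e.symm x) (e.symm y) := by
      rintro x y ⟨-, a, b, hab, rfl, rfl⟩
      simpa using hab
    let f : (G.map e.toEmbedding) →g G := ⟨e.symm, fun h => hadj _ _ h⟩
    have hc : (w.map f).IsCycle :=
      (Walk.map_isCycle_iff_of_injective (e.symm.injective : Function.Injective (⇑e.symm))).mpr hw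
    have := le_egirth.mp le_rfl _ (w.map f) hc
    simpa [Walk.length_map] using this

lemma isBabi_map (r s g : ℕ) (h : IsBabi r s g G) : IsBabi r s g (G.map e.toEmbedding) := by
  obtain ⟨h1, h2, ⟨vr, hvr⟩, ⟨vs, hvs⟩, h5⟩ := h
  have hdm : ∀ w, deg (G.map e.toEmbedding) w = deg G (e.symm w) := fun w => by
    conv_lhs => rw [← e.apply_symm_apply w]
    rw [deg_map]
  have hset : ∀ d : ℕ, {w | deg (G.map e.toEmbedding) w = d} = e '' {v | deg G v = d} := by
    intro d
    ext w
    rw [mem_setOf_eq, hdm]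
    constructor
    · intro hw
      exact ⟨e.symm w, hw, e.apply_symm_apply w⟩
    · rintro ⟨v, hv, rfl⟩
      rwa [e.symm_apply_apply]
  refine ⟨?_, fun w => by rw [hdm]; exact h2 _,
    ⟨e vr, by rw [hdm, e.symm_apply_apply]; exact hvr⟩,
    ⟨e vs, by rw [hdm, e.symm_apply_apply]; exact hvs⟩, ?_⟩
  · rw [girth, egirth_map, ← girth, h1]
  · rw [hset r, hset s, Set.ncard_image_of_injective _ e.injective,
      Set.ncard_image_of_injective _ e.injective, h5]

end T

/-- `n_bb(r,s;4) = 4(s − r)` when `s ≥ 2r`. -/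
theorem stmt_12 (r s : ℕ) (hr : 2 ≤ r) (hrs : r < s) (h2r : 2 * r ≤ s) :
    (∃ G : SimpleGraph (Fin (4 * (s - r))), IsBabi r s 4 G) ∧
    (∀ (n : ℕ) (G : SimpleGraph (Fin n)), IsBabi r s 4 G → 4 * (s - r) ≤ n) := by
  constructor
  · haveI : NeZero (s - r) := ⟨by omega⟩
    refine ⟨(baseGraph r (s - r)).map (finProdFinEquiv).toEmbedding, ?_⟩
    have hs : s = (s - r) + r := by omega
    have := isBabi_map finProdFinEquiv (baseGraph r (s - r)) r ((s - r) + r) 4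
      (isBabi_base hr (by omega))
    rwa [← hs] at this
  · exact fun n G h => lower_bound r s n hr hrs h2r G h
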